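/- For integer n ≥ 1, the only values t > 0 for which the metric y = t·s on CP^{2n+1} (i.e. the family g = y⟨,⟩_(j) + y⟨,⟩_(k) + s⟨,⟩_{H^n}) is Einstein are t = 1 (the Fubini-Study metric) and t = 1/(n+1) (Ziller's second Einstein metric). Equivalently, the Einstein condition r_j = r_h for these metrics, where r_j = 4/y + 4ny/s² and r_h = −4y/s² + (4n+8)/s (the x → 0 degenerations), holds if and only if y/s = 1 or y/s = 1/(n+1). -/

import Mathlib

/-- For the homogeneous metrics on `CP^{2n+1}` with parameters `y` (on the
2-dimensional summand) and `s` (on the 4n-dimensional summand), the Einstein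
condition `r_j = r_h`, with `r_j = 4/y + 4ny/s²` and `r_h = −4y/s² + (4n+8)/s`,
holds iff `y/s = 1` (Fubini–Study) or `y/s = 1/(n+1)` (Ziller's second
Einstein metric). -/
theorem cp_einstein_metrics (n : ℕ) (hn : 1 ≤ n) (y s : ℝ)
    (hy : 0 < y) (hs : 0 < s) :
    4/y + 4*(n:ℝ)*y/s^2 = -4*y/s^2 + (4*(n:ℝ) + 8)/s
      ↔ y/s = 1 ∨ y/s = 1/((n:ℝ) + 1) := by
  have hy' := hy.ne'
  have hs' := hs.ne'
  have hn1 : (0:ℝ) < (n:ℝ) + 1 := by positivity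
  have key : (4/y + 4*(n:ℝ)*y/s^2 = -4*y/s^2 + (4*(n:ℝ) + 8)/s)
      ↔ (y - s) * (((n:ℝ)+1)*y - s) = 0 := by
    constructor
    · intro h
      field_simp at h
      have h2 : (y - s) * (((n:ℝ)+1)*y - s) * s^3 = 0 := by linear_combination (s^3/4) * h
      rcases mul_eq_zero.1 h2 with h3 | h3
      · exact h3
      · exact absurd h3 (pow_ne_zero 3 hs')
    · intro h
      field_simp
      linear_combination 4 * h
  rw [key, mul_eq_zero, div_eq_one_iff_eq hs', sub_eq_zero, sub_eq_zero,
    div_eq_div_iff hs' hn1.ne', one_mul]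
  constructor
  · rintro (h | h)
    · exact Or.inl h
    · right; linarith [h]
  · rintro (h | h)
    · exact Or.inl h
    · right; linarith [h]
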